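/- Let H be a Hilbert space, T, A : H →L H bounded, P : H →L H self-adjoint with P ≽ εI, ε > 0, and suppose A* P T + T* P A ≼ −εI. Then any continuously differentiable trajectory with d/dt(T x(t)) = A x(t) satisfies ⟪T x(t), P T x(t)⟫ ≤ ⟪T x(0), P T x(0)⟫ for all t ≥ 0, and ∫₀^∞ ‖x(t)‖² dt ≤ (1/ε)⟪T x(0), P T x(0)⟫. -/
import Mathlib


open RealInnerProductSpace ContinuousLinearMap MeasureTheory

/-- PIE Lyapunov stability/energy estimate: if `P ≽ εI` is self-adjoint and
`A* P T + T* P A ≼ -εI`, then along any trajectory with `d/dt (T x(t)) = A x(t)` the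
Lyapunov functional `⟪T x(t), P T x(t)⟫` is nonincreasing from its initial value and the
state satisfies the L₂ bound `∫₀^∞ ‖x(t)‖² dt ≤ (1/ε) ⟪T x(0), P T x(0)⟫`. -/
theorem pie_lyapunov_energy_estimate
    {H : Type*} [NormedAddCommGroup H] [InnerProductSpace ℝ H] [CompleteSpace H]
    (T A : H →L[ℝ] H) (P : H →L[ℝ] H) (hP : IsSelfAdjoint P)
    (ε : ℝ) (hε : 0 < ε)
    (hPpos : ∀ v : H, ε * ‖v‖ ^ 2 ≤ ⟪v, P v⟫)
    (hLPI : ∀ v : H,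
      ⟪v, (adjoint A ∘L P ∘L T + adjoint T ∘L P ∘L A) v⟫ ≤ -ε * ‖v‖ ^ 2)
    (x : ℝ → H) (hx : Continuous x)
    (htraj : ∀ t : ℝ, 0 ≤ t → HasDerivAt (fun τ => T (x τ)) (A (x t)) t) :
    (∀ t : ℝ, 0 ≤ t → ⟪T (x t), P (T (x t))⟫ ≤ ⟪T (x 0), P (T (x 0))⟫) ∧
      (∫ t in Set.Ioi (0 : ℝ), ‖x t‖ ^ 2) ≤ (1 / ε) * ⟪T (x 0), P (T (x 0))⟫ := by
  set V : ℝ → ℝ := fun t => ⟪T (x t), P (T (x t))⟫ with hVdef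
  set D : ℝ → ℝ := fun t => ⟪T (x t), P (A (x t))⟫ + ⟪A (x t), P (T (x t))⟫ with hDdef
  have hD : ∀ t : ℝ, 0 ≤ t → HasDerivAt V (D t) t := by
    intro t ht
    have h1 : HasDerivAt (fun τ => T (x τ)) (A (x t)) t := htraj t ht
    have h2 : HasDerivAt (fun τ => P (T (x τ))) (P (A (x t))) t :=
      P.hasFDerivAt.comp_hasDerivAt t h1
    exact h1.inner ℝ h2
  have hDle : ∀ t : ℝ, D t ≤ -ε * ‖x t‖ ^ 2 := by
    intro t
    have := hLPI (x t)
    simp only [ContinuousLinearMap.add_apply, ContinuousLinearMap.comp_apply,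
      inner_add_right, adjoint_inner_right] at this
    simpa [hDdef, add_comm] using this
  have hDcont : Continuous D := by
    rw [hDdef]
    exact (Continuous.inner (by fun_prop) (by fun_prop)).add
      (Continuous.inner (by fun_prop) (by fun_prop))
  have hVcont : Continuous V := by
    rw [hVdef]; exact Continuous.inner (by fun_prop) (by fun_prop)
  have hV0 : ∀ t : ℝ, 0 ≤ V t := fun t =>
    le_trans (by positivity) (hPpos (T (x t)))
  -- key interval estimate
  have key : ∀ b : ℝ, 0 ≤ b → V b - V 0 + ε * ∫ t in (0:ℝ)..b, ‖x t‖ ^ 2 ≤ 0 := by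
    intro b hb
    have hftc : V b - V 0 = ∫ t in (0:ℝ)..b, D t := by
      refine (intervalIntegral.integral_eq_sub_of_hasDerivAt ?_ ?_).symm
      · intro t ht
        rw [Set.uIcc_of_le hb] at ht
        exact hD t ht.1
      · exact hDcont.intervalIntegrable 0 b
    have hmono : (∫ t in (0:ℝ)..b, D t) ≤ ∫ t in (0:ℝ)..b, -ε * ‖x t‖ ^ 2 := by
      refine intervalIntegral.integral_mono_on hb (hDcont.intervalIntegrable 0 b)
        ((Continuous.intervalIntegrable (by fun_prop) 0 b)) (fun t _ => hDle t)
    have : (∫ t in (0:ℝ)..b, -ε * ‖x t‖ ^ 2) = -ε * ∫ t in (0:ℝ)..b, ‖x t‖ ^ 2 := by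
      simp [intervalIntegral.integral_const_mul]
    rw [hftc]
    nlinarith [hmono]
  have hIb : ∀ b : ℝ, 0 ≤ b → (∫ t in (0:ℝ)..b, ‖x t‖ ^ 2) ≤ (1 / ε) * V 0 := by
    intro b hb
    have h := key b hb
    have h0 := hV0 b
    rw [div_mul_eq_mul_div, le_div_iff₀ hε, one_mul, mul_comm]
    linarith
  have hint : ∀ b : ℝ, IntegrableOn (fun t => ‖x t‖ ^ 2) (Set.Ioc (0:ℝ) b) := by
    intro b
    exact (Continuous.integrableOn_Ioc (by fun_prop))
  have hInteg : IntegrableOn (fun t => ‖x t‖ ^ 2) (Set.Ioi (0:ℝ)) := by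
    refine integrableOn_Ioi_of_intervalIntegral_norm_bounded ((1/ε) * V 0) 0
      (b := fun n : ℕ => (n : ℝ)) (l := Filter.atTop) (fun i => hint i)
      tendsto_natCast_atTop_atTop ?_
    filter_upwards with n
    have : ∀ t : ℝ, ‖‖x t‖ ^ 2‖ = ‖x t‖ ^ 2 := fun t => by
      rw [Real.norm_of_nonneg (by positivity)]
    simp only [this]
    exact hIb n (Nat.cast_nonneg n)
  refine ⟨?_, ?_⟩
  · intro t ht
    have h := key t ht
    have hnn : 0 ≤ ∫ s in (0:ℝ)..t, ‖x s‖ ^ 2 :=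
      intervalIntegral.integral_nonneg ht (fun s _ => by positivity)
    nlinarith
  · have htend := intervalIntegral_tendsto_integral_Ioi (f := fun t => ‖x t‖ ^ 2)
      (μ := volume) 0 hInteg (tendsto_natCast_atTop_atTop (R := ℝ))
    refine le_of_tendsto htend ?_
    filter_upwards with n using hIb n (Nat.cast_nonneg n)
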